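/- Let d ≥ 3, C > 0, p > 1 and q = p/(p−1). Define for z ∈ ℝ^d, r ∈ (0,t], t ≥ 1 the function h(z,r) = 1_{|z| ≤ C} + t^{d/(2p)} r^{−d/2} e^{−|z|²/(qCr)} 1_{|z| > C}. Then there is a constant C' such that for all x with |x| ≥ 4C and all t ≥ 1: ∫_0^t ∫_{ℝ^d} h(x − y, r) h(y, r) dy dr ≤ C' (t^{d/p} + t^{d/(2p)}) / |x|^{d−2}. -/

import Mathlib

open MeasureTheory
open scoped Classical
set_option maxHeartbeats 1000000

/-- The heat-type kernel `h(z,r) = 1_{‖z‖ ≤ C} + t^{d/(2p)} r^{−d/2} e^{−‖z‖²/(qCr)} 1_{‖z‖ > C}`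
dominating `E[φ^q(z + B_r)]^{1/q}` for a compactly supported mollifier `φ`. -/
noncomputable def hker (d : ℕ) (Cc t p q : ℝ) (z : EuclideanSpace ℝ (Fin d)) (r : ℝ) : ℝ :=
  (if ‖z‖ ≤ Cc then 1 else 0) +
    t ^ ((d : ℝ) / (2 * p)) * r ^ (-(d : ℝ) / 2) * Real.exp (-‖z‖ ^ 2 / (q * Cc * r)) *
      (if Cc < ‖z‖ then 1 else 0)

section hkerAux

open Set Real

variable {d : ℕ}

lemma hker_gauss_integrable {b : ℝ} (hb : 0 < b) :
    Integrable (fun v : EuclideanSpace ℝ (Fin d) => Real.exp (-b * ‖v‖ ^ 2)) := by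
  have h := GaussianFourier.integrable_cexp_neg_mul_sq_norm_add
      (b := (b:ℂ)) (by simpa using hb) 0 (0 : EuclideanSpace ℝ (Fin d))
  have h2 := h.re
  refine h2.congr (Filter.Eventually.of_forall fun v => ?_)
  show RCLike.re (Complex.exp _) = _
  have : (-(b:ℂ) * (‖v‖:ℂ) ^ 2 + 0 * ((inner ℝ (0 : EuclideanSpace ℝ (Fin d)) v : ℝ) : ℂ))
      = ((-b * ‖v‖^2 : ℝ) : ℂ) := by push_cast; ring
  simp only [RCLike.re_to_complex]
  rw [this, Complex.exp_ofReal_re]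

lemma hker_gauss_integral {b : ℝ} (hb : 0 < b) :
    ∫ v : EuclideanSpace ℝ (Fin d), Real.exp (-b * ‖v‖ ^ 2) = (π/b) ^ ((d:ℝ)/2) := by
  rw [GaussianFourier.integral_rexp_neg_mul_sq_norm hb]
  simp [finrank_euclideanSpace_fin]

lemma hker_rint (hd : 3 ≤ d) {A : ℝ} (hA : 0 < A) :
    IntegrableOn (fun r : ℝ => r ^ (-(d:ℝ)/2) * Real.exp (-A/r)) (Set.Ioi 0) ∧
    ∫ r in Set.Ioi 0, r ^ (-(d:ℝ)/2) * Real.exp (-A/r)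
      = Real.Gamma ((d:ℝ)/2 - 1) * A ^ (1-(d:ℝ)/2) := by
  have hd' : (3:ℝ) ≤ (d:ℝ) := by exact_mod_cast hd
  set f : ℝ → ℝ := fun y => y ^ ((d:ℝ)/2 - 2) * Real.exp (-(A*y)) with hf
  have hfi : IntegrableOn f (Ioi 0) := by
    have h := integrableOn_rpow_mul_exp_neg_mul_rpow (s := (d:ℝ)/2-2) (p := 1) (b := A)
      (by linarith) zero_lt_one hA
    exact h.congr_fun (fun x hx => by beta_reduce; rw [rpow_one, neg_mul]) measurableSet_Ioi
  have key : EqOn (fun x : ℝ => (|(-1:ℝ)| * x ^ ((-1:ℝ)-1)) • f (x ^ (-1:ℝ)))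
      (fun r : ℝ => r ^ (-(d:ℝ)/2) * Real.exp (-A/r)) (Ioi 0) := by
    intro x hx
    have hx0 : (0:ℝ) < x := hx
    simp only [hf, smul_eq_mul, abs_neg, abs_one, one_mul]
    rw [← Real.rpow_mul hx0.le, Real.rpow_neg_one, ← mul_assoc, ← Real.rpow_add hx0]
    rw [show (-1:ℝ) - 1 + -1 * ((d:ℝ)/2 - 2) = -(d:ℝ)/2 by ring,
      show A * x⁻¹ = A / x by rw [div_eq_mul_inv], neg_div, neg_div]
  have hint : ∫ y in Ioi (0:ℝ), f y = Real.Gamma ((d:ℝ)/2 - 1) * A ^ (1-(d:ℝ)/2) := by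
    have h2 := Real.integral_rpow_mul_exp_neg_mul_Ioi (a := (d:ℝ)/2 - 1) (r := A)
      (by linarith) hA
    rw [show (d:ℝ)/2 - 1 - 1 = (d:ℝ)/2 - 2 by ring] at h2
    rw [hf, h2, one_div, ← Real.rpow_neg_one A, ← Real.rpow_mul hA.le]
    rw [show (-1:ℝ) * ((d:ℝ)/2 - 1) = 1 - (d:ℝ)/2 by ring, mul_comm]
  constructor
  · exact ((integrableOn_Ioi_comp_rpow_iff f (by norm_num : (-1:ℝ) ≠ 0)).mpr hfi).congr_fun
      key measurableSet_Ioi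
  · rw [← setIntegral_congr_fun measurableSet_Ioi key, integral_comp_rpow_Ioi f
      (by norm_num : (-1:ℝ) ≠ 0), hint]

lemma hker_nonneg {Cc t p q r : ℝ} (hr : 0 < r) (ht : 0 ≤ t) (z : EuclideanSpace ℝ (Fin d)) :
    0 ≤ hker d Cc t p q z r := by
  unfold hker
  have h1 : 0 ≤ t ^ ((d:ℝ)/(2*p)) := Real.rpow_nonneg ht _
  have h2 : 0 ≤ r ^ (-(d:ℝ)/2) := Real.rpow_nonneg hr.le _
  refine add_nonneg ?_ ?_
  · split_ifs <;> norm_num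
  · split_ifs with h
    · rw [mul_one]
      exact mul_nonneg (mul_nonneg h1 h2) (Real.exp_pos _).le
    · rw [mul_zero]

end hkerAux

/-- the space-time convolution of two such kernels decays like the
Newtonian potential `‖x‖^{−(d−2)}`, with polynomial-in-`t` prefactors. -/
theorem hker_convolution_bound (d : ℕ) (hd : 3 ≤ d) (Cc : ℝ) (hC : 0 < Cc)
    (p q : ℝ) (hp : 1 < p) (hq : q = p / (p - 1)) :
    ∃ C' > 0, ∀ t : ℝ, 1 ≤ t → ∀ x : EuclideanSpace ℝ (Fin d), 4 * Cc ≤ ‖x‖ →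
      (∫ r in Set.Ioc (0:ℝ) t, ∫ y, hker d Cc t p q (x - y) r * hker d Cc t p q y r)
        ≤ C' * (t ^ ((d : ℝ) / p) + t ^ ((d : ℝ) / (2 * p))) / ‖x‖ ^ ((d : ℝ) - 2) := by
  have hp0 : 0 < p := lt_trans one_pos hp
  have hp1 : 0 < p - 1 := sub_pos.mpr hp
  have hq0 : 0 < q := by rw [hq]; positivity
  have ha0 : 0 < q * Cc := mul_pos hq0 hC
  set a : ℝ := q * Cc with ha
  set V : ℝ := (volume (Metric.closedBall (0 : EuclideanSpace ℝ (Fin d)) Cc)).toReal with hV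
  have hV0 : 0 ≤ V := ENNReal.toReal_nonneg
  set K : ℝ := 2 * V + (Real.pi * a / 2) ^ ((d:ℝ)/2) with hK
  have hpi : (0:ℝ) < Real.pi * a / 2 := by positivity
  have hK0 : 0 < K := by
    have := Real.rpow_pos_of_pos hpi ((d:ℝ)/2)
    positivity
  set Γc : ℝ := Real.Gamma ((d:ℝ)/2 - 1) with hΓ
  have hd' : (3:ℝ) ≤ (d:ℝ) := by exact_mod_cast hd
  have hΓ0 : 0 < Γc := Real.Gamma_pos_of_pos (by linarith)
  have h2a : (0:ℝ) < 2 * a := by linarith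
  refine ⟨K * Γc * (2*a) ^ ((d:ℝ)/2 - 1), by positivity, fun t ht x hx => ?_⟩
  have ht0 : (0:ℝ) < t := lt_of_lt_of_le one_pos ht
  have hx0 : (0:ℝ) < ‖x‖ := lt_of_lt_of_le (by linarith) hx
  set A : ℝ := ‖x‖^2 / (2*a) with hA
  have hA0 : 0 < A := by positivity
  set w : EuclideanSpace ℝ (Fin d) := (2:ℝ)⁻¹ • x with hw
  -- parallelogram identity
  have hpar : ∀ y : EuclideanSpace ℝ (Fin d),
      ‖x - y‖^2 + ‖y‖^2 = ‖x‖^2/2 + 2 * ‖y - w‖^2 := by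
    intro y
    have h1 := parallelogram_law_with_norm ℝ (x - y) y
    have h2 : x - y + y = x := by abel
    have h3 : x - y - y = (2:ℝ) • (w - y) := by
      rw [hw]
      module
    have h4 : ‖x - y - y‖ = 2 * ‖y - w‖ := by
      rw [h3, norm_smul, norm_sub_rev]
      norm_num
    rw [h2, h4] at h1
    nlinarith [h1]
  -- inner bound
  have inner_bound : ∀ r ∈ Set.Ioc (0:ℝ) t,
      (∫ y, hker d Cc t p q (x - y) r * hker d Cc t p q y r)
        ≤ K * (t ^ ((d:ℝ)/p) + t ^ ((d:ℝ)/(2*p)))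
            * (r ^ (-(d:ℝ)/2) * Real.exp (-A/r)) := by
    rintro r ⟨hr, hrt⟩
    have har : (0:ℝ) < a * r := mul_pos ha0 hr
    have hb2 : (0:ℝ) < 2/(a*r) := by positivity
    have hT : 0 < t ^ ((d:ℝ)/(2*p)) := Real.rpow_pos_of_pos ht0 _
    have hR : 0 < r ^ (-(d:ℝ)/2) := Real.rpow_pos_of_pos hr _
    set X : ℝ := r ^ (-(d:ℝ)/2) * Real.exp (-A/r) with hX
    have hX0 : 0 < X := mul_pos hR (Real.exp_pos _)
    set c1 : ℝ := t ^ ((d:ℝ)/(2*p)) * X with hc1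
    set c2 : ℝ := t ^ ((d:ℝ)/(2*p)) * t ^ ((d:ℝ)/(2*p))
        * (r ^ (-(d:ℝ)) * Real.exp (-A/r)) with hc2
    set g : EuclideanSpace ℝ (Fin d) → ℝ := fun y =>
      c1 * ((if ‖x - y‖ ≤ Cc then (1:ℝ) else 0) + (if ‖y‖ ≤ Cc then (1:ℝ) else 0))
        + c2 * Real.exp (-(2/(a*r)) * ‖y - w‖ ^ 2) with hg
    have hc10 : 0 < c1 := mul_pos hT hX0
    have hc20 : 0 < c2 := by
      have := Real.rpow_pos_of_pos hr (-(d:ℝ))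
      have := Real.exp_pos (-A/r)
      positivity
    -- pointwise bound
    have hpt : ∀ y, hker d Cc t p q (x - y) r * hker d Cc t p q y r ≤ g y := by
      intro y
      have hgpos : 0 ≤ c2 * Real.exp (-(2/(a*r)) * ‖y - w‖ ^ 2) :=
        mul_nonneg hc20.le (Real.exp_pos _).le
      have htri : ‖x‖ ≤ ‖x - y‖ + ‖y‖ := by
        simpa using norm_add_le (x - y) y
      simp only [hker, hg]
      rcases le_or_gt ‖x - y‖ Cc with h1 | h1 <;> rcases le_or_gt ‖y‖ Cc with h2 | h2
      · exfalso; linarith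
      · -- ‖x-y‖ ≤ Cc, Cc < ‖y‖
        rw [if_pos h1, if_neg (not_lt.mpr h1), if_neg (not_le.mpr h2), if_pos h2]
        have h6 : 3/4*‖x‖ ≤ ‖y‖ := by linarith
        have h7 : (3/4*‖x‖)^2 ≤ ‖y‖^2 := by
          have h60 : (0:ℝ) ≤ 3/4*‖x‖ := by positivity
          exact pow_le_pow_left₀ h60 h6 2
        have hy2 : ‖x‖^2/2 ≤ ‖y‖^2 := by
          have h8 : 9/16*‖x‖^2 ≤ ‖y‖^2 := by
            calc 9/16*‖x‖^2 = (3/4*‖x‖)^2 := by ring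
              _ ≤ ‖y‖^2 := h7
          have h9 := sq_nonneg ‖x‖
          linarith
        have hexp : Real.exp (-‖y‖^2 / (q * Cc * r)) ≤ Real.exp (-A/r) := by
          apply Real.exp_le_exp.mpr
          rw [← ha, hA, neg_div, neg_div, neg_le_neg_iff, div_div,
            div_le_div_iff₀ (by positivity) (by positivity)]
          have h10 : ‖x‖^2 * (a*r) ≤ (2*‖y‖^2) * (a*r) :=
            mul_le_mul_of_nonneg_right (by linarith) har.le
          linarith
        calc (1 + t ^ ((d:ℝ)/(2*p)) * r ^ (-(d:ℝ)/2) * Real.exp (-‖x - y‖^2 / (q*Cc*r)) * 0)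
              * (0 + t ^ ((d:ℝ)/(2*p)) * r ^ (-(d:ℝ)/2) * Real.exp (-‖y‖^2 / (q*Cc*r)) * 1)
            = t ^ ((d:ℝ)/(2*p)) * r ^ (-(d:ℝ)/2) * Real.exp (-‖y‖^2 / (q*Cc*r)) := by ring
          _ ≤ c1 * 1 := by
              rw [hc1, hX, mul_one, mul_assoc]
              exact mul_le_mul_of_nonneg_left
                (mul_le_mul_of_nonneg_left hexp hR.le) hT.le
          _ ≤ c1 * (1 + 0) + c2 * Real.exp (-(2/(a*r)) * ‖y - w‖ ^ 2) := by
              rw [add_zero]; linarith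
      · -- Cc < ‖x-y‖, ‖y‖ ≤ Cc
        rw [if_neg (not_le.mpr h1), if_pos h1, if_pos h2, if_neg (not_lt.mpr h2)]
        have h6 : 3/4*‖x‖ ≤ ‖x - y‖ := by linarith
        have h7 : (3/4*‖x‖)^2 ≤ ‖x - y‖^2 := by
          have h60 : (0:ℝ) ≤ 3/4*‖x‖ := by positivity
          exact pow_le_pow_left₀ h60 h6 2
        have hy2 : ‖x‖^2/2 ≤ ‖x - y‖^2 := by
          have h8 : 9/16*‖x‖^2 ≤ ‖x - y‖^2 := by
            calc 9/16*‖x‖^2 = (3/4*‖x‖)^2 := by ring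
              _ ≤ ‖x - y‖^2 := h7
          have h9 := sq_nonneg ‖x‖
          linarith
        have hexp : Real.exp (-‖x - y‖^2 / (q * Cc * r)) ≤ Real.exp (-A/r) := by
          apply Real.exp_le_exp.mpr
          rw [← ha, hA, neg_div, neg_div, neg_le_neg_iff, div_div,
            div_le_div_iff₀ (by positivity) (by positivity)]
          have h10 : ‖x‖^2 * (a*r) ≤ (2*‖x - y‖^2) * (a*r) :=
            mul_le_mul_of_nonneg_right (by linarith) har.le
          linarith
        calc (0 + t ^ ((d:ℝ)/(2*p)) * r ^ (-(d:ℝ)/2) * Real.exp (-‖x - y‖^2 / (q*Cc*r)) * 1)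
              * (1 + t ^ ((d:ℝ)/(2*p)) * r ^ (-(d:ℝ)/2) * Real.exp (-‖y‖^2 / (q*Cc*r)) * 0)
            = t ^ ((d:ℝ)/(2*p)) * r ^ (-(d:ℝ)/2) * Real.exp (-‖x - y‖^2 / (q*Cc*r)) := by ring
          _ ≤ c1 * 1 := by
              rw [hc1, hX, mul_one, mul_assoc]
              exact mul_le_mul_of_nonneg_left
                (mul_le_mul_of_nonneg_left hexp hR.le) hT.le
          _ ≤ c1 * (0 + 1) + c2 * Real.exp (-(2/(a*r)) * ‖y - w‖ ^ 2) := by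
              rw [zero_add]; linarith
      · -- both Gaussians
        rw [if_neg (not_le.mpr h1), if_pos h1, if_neg (not_le.mpr h2), if_pos h2]
        have hRR : r ^ (-(d:ℝ)/2) * r ^ (-(d:ℝ)/2) = r ^ (-(d:ℝ)) := by
          rw [← Real.rpow_add hr]; norm_num
        have h5 : ‖x - y‖^2 = ‖x‖^2/2 + 2 * ‖y - w‖^2 - ‖y‖^2 := by linarith [hpar y]
        have key : Real.exp (-‖x - y‖^2 / (q*Cc*r)) * Real.exp (-‖y‖^2 / (q*Cc*r))
            = Real.exp (-A/r) * Real.exp (-(2/(a*r)) * ‖y - w‖ ^ 2) := by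
          rw [← Real.exp_add, ← Real.exp_add]
          congr 1
          rw [← ha, hA, h5]
          field_simp
          ring
        calc (0 + t ^ ((d:ℝ)/(2*p)) * r ^ (-(d:ℝ)/2) * Real.exp (-‖x - y‖^2 / (q*Cc*r)) * 1)
              * (0 + t ^ ((d:ℝ)/(2*p)) * r ^ (-(d:ℝ)/2) * Real.exp (-‖y‖^2 / (q*Cc*r)) * 1)
            = (t ^ ((d:ℝ)/(2*p)) * t ^ ((d:ℝ)/(2*p))) * ((r ^ (-(d:ℝ)/2) * r ^ (-(d:ℝ)/2))
                * (Real.exp (-‖x - y‖^2 / (q*Cc*r)) * Real.exp (-‖y‖^2 / (q*Cc*r)))) := by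
              ring
          _ = c2 * Real.exp (-(2/(a*r)) * ‖y - w‖ ^ 2) := by
              rw [hRR, key, hc2]; ring
          _ ≤ c1 * (0 + 0) + c2 * Real.exp (-(2/(a*r)) * ‖y - w‖ ^ 2) := by
              rw [add_zero, mul_zero, zero_add]
    -- integrability of g
    have hind1 : (fun y : EuclideanSpace ℝ (Fin d) => if ‖x - y‖ ≤ Cc then (1:ℝ) else 0)
        = (Metric.closedBall x Cc).indicator (fun _ => (1:ℝ)) := by
      funext y
      simp [Set.indicator, Metric.mem_closedBall, dist_eq_norm, norm_sub_rev]
    have hind2 : (fun y : EuclideanSpace ℝ (Fin d) => if ‖y‖ ≤ Cc then (1:ℝ) else 0)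
        = (Metric.closedBall (0 : EuclideanSpace ℝ (Fin d)) Cc).indicator (fun _ => (1:ℝ)) := by
      funext y
      simp [Set.indicator, Metric.mem_closedBall, dist_eq_norm]
    have hi1 : Integrable (fun y : EuclideanSpace ℝ (Fin d) =>
        if ‖x - y‖ ≤ Cc then (1:ℝ) else 0) := by
      rw [hind1, integrable_indicator_iff measurableSet_closedBall]
      exact integrableOn_const measure_closedBall_lt_top.ne
    have hi2 : Integrable (fun y : EuclideanSpace ℝ (Fin d) =>
        if ‖y‖ ≤ Cc then (1:ℝ) else 0) := by
      rw [hind2, integrable_indicator_iff measurableSet_closedBall]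
      exact integrableOn_const measure_closedBall_lt_top.ne
    have hgauss : Integrable (fun y : EuclideanSpace ℝ (Fin d) =>
        Real.exp (-(2/(a*r)) * ‖y - w‖ ^ 2)) :=
      (hker_gauss_integrable hb2).comp_sub_right w
    have hgint : Integrable g := by
      rw [hg]
      exact ((hi1.add hi2).const_mul c1).add (hgauss.const_mul c2)
    -- bound inner integral by ∫ g
    have step1 : (∫ y, hker d Cc t p q (x - y) r * hker d Cc t p q y r) ≤ ∫ y, g y := by
      refine integral_mono_of_nonneg ?_ hgint ?_
      · exact Filter.Eventually.of_forall fun y =>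
          mul_nonneg (hker_nonneg hr (by linarith) _) (hker_nonneg hr (by linarith) _)
      · exact Filter.Eventually.of_forall hpt
    -- compute ∫ g
    have hI1 : (∫ y : EuclideanSpace ℝ (Fin d), if ‖x - y‖ ≤ Cc then (1:ℝ) else 0) = V := by
      rw [hind1, hV]
      rw [show ((Metric.closedBall x Cc).indicator (fun _ => (1:ℝ)))
          = (Metric.closedBall x Cc).indicator 1 from rfl]
      rw [integral_indicator_one measurableSet_closedBall, measureReal_def,
        Measure.addHaar_closedBall_center]
    have hI2 : (∫ y : EuclideanSpace ℝ (Fin d), if ‖y‖ ≤ Cc then (1:ℝ) else 0) = V := by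
      rw [hind2, hV]
      rw [show ((Metric.closedBall (0 : EuclideanSpace ℝ (Fin d)) Cc).indicator (fun _ => (1:ℝ)))
          = (Metric.closedBall (0 : EuclideanSpace ℝ (Fin d)) Cc).indicator 1 from rfl]
      rw [integral_indicator_one measurableSet_closedBall, measureReal_def]
    have hIg : (∫ y : EuclideanSpace ℝ (Fin d), Real.exp (-(2/(a*r)) * ‖y - w‖ ^ 2))
        = (Real.pi/(2/(a*r))) ^ ((d:ℝ)/2) := by
      have h1 : (∫ y : EuclideanSpace ℝ (Fin d), Real.exp (-(2/(a*r)) * ‖y - w‖ ^ 2))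
          = ∫ y : EuclideanSpace ℝ (Fin d), Real.exp (-(2/(a*r)) * ‖y‖ ^ 2) :=
        integral_sub_right_eq_self (fun v => Real.exp (-(2/(a*r)) * ‖v‖ ^ 2)) w
      rw [h1, hker_gauss_integral hb2]
    have hi12 : Integrable (fun y : EuclideanSpace ℝ (Fin d) =>
        (if ‖x - y‖ ≤ Cc then (1:ℝ) else 0) + (if ‖y‖ ≤ Cc then (1:ℝ) else 0)) := hi1.add hi2
    have h121 : Integrable (fun y : EuclideanSpace ℝ (Fin d) =>
        c1 * ((if ‖x - y‖ ≤ Cc then (1:ℝ) else 0) + (if ‖y‖ ≤ Cc then (1:ℝ) else 0))) :=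
      hi12.const_mul c1
    have h122 : Integrable (fun y : EuclideanSpace ℝ (Fin d) =>
        c2 * Real.exp (-(2/(a*r)) * ‖y - w‖ ^ 2)) := hgauss.const_mul c2
    have step2 : (∫ y, g y) = c1 * (V + V) + c2 * (Real.pi/(2/(a*r))) ^ ((d:ℝ)/2) := by
      rw [hg]
      rw [integral_add h121 h122, integral_const_mul, integral_const_mul,
        integral_add hi1 hi2, hI1, hI2, hIg]
    -- final arithmetic
    have harith : c1 * (V + V) + c2 * (Real.pi/(2/(a*r))) ^ ((d:ℝ)/2)
        ≤ K * (t ^ ((d:ℝ)/p) + t ^ ((d:ℝ)/(2*p))) * X := by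
      have hgv : (Real.pi/(2/(a*r))) ^ ((d:ℝ)/2)
          = (Real.pi * a / 2) ^ ((d:ℝ)/2) * r ^ ((d:ℝ)/2) := by
        rw [show Real.pi/(2/(a*r)) = (Real.pi * a / 2) * r by field_simp]
        exact Real.mul_rpow hpi.le hr.le
      have htt : t ^ ((d:ℝ)/(2*p)) * t ^ ((d:ℝ)/(2*p)) = t ^ ((d:ℝ)/p) := by
        rw [← Real.rpow_add ht0]
        congr 1
        field_simp
        ring
      have hrr : r ^ (-(d:ℝ)) * r ^ ((d:ℝ)/2) = r ^ (-(d:ℝ)/2) := by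
        rw [← Real.rpow_add hr]
        congr 1
        ring
      have hc2' : c2 * (Real.pi/(2/(a*r))) ^ ((d:ℝ)/2)
          = (Real.pi * a / 2) ^ ((d:ℝ)/2) * (t ^ ((d:ℝ)/p) * X) := by
        rw [hgv, hc2, hX, ← htt, ← hrr]
        ring
      rw [hc2', hc1, hK]
      have hP0 : 0 ≤ (Real.pi * a / 2) ^ ((d:ℝ)/2) := (Real.rpow_pos_of_pos hpi _).le
      have htp : 0 < t ^ ((d:ℝ)/p) := Real.rpow_pos_of_pos ht0 _
      have hh1 : 0 ≤ V * (t ^ ((d:ℝ)/p) * X) := by positivity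
      have hh2 : 0 ≤ (Real.pi * a / 2) ^ ((d:ℝ)/2) * (t ^ ((d:ℝ)/(2*p)) * X) := by
        exact mul_nonneg hP0 (mul_nonneg hT.le hX0.le)
      linarith [hh1, hh2]
    calc (∫ y, hker d Cc t p q (x - y) r * hker d Cc t p q y r)
        ≤ ∫ y, g y := step1
      _ = c1 * (V + V) + c2 * (Real.pi/(2/(a*r))) ^ ((d:ℝ)/2) := step2
      _ ≤ K * (t ^ ((d:ℝ)/p) + t ^ ((d:ℝ)/(2*p))) * X := harith
  -- outer integral
  have hXint := hker_rint hd hA0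
  have houter : (∫ r in Set.Ioc (0:ℝ) t, ∫ y, hker d Cc t p q (x - y) r * hker d Cc t p q y r)
      ≤ ∫ r in Set.Ioc (0:ℝ) t, K * (t ^ ((d:ℝ)/p) + t ^ ((d:ℝ)/(2*p)))
          * (r ^ (-(d:ℝ)/2) * Real.exp (-A/r)) := by
    refine integral_mono_of_nonneg ?_ ?_ ?_
    · rw [Filter.EventuallyLE, ae_restrict_iff' measurableSet_Ioc]
      exact Filter.Eventually.of_forall fun r hr => integral_nonneg fun y =>
        mul_nonneg (hker_nonneg hr.1 (by linarith) _) (hker_nonneg hr.1 (by linarith) _)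
    · exact (hXint.1.mono_set Set.Ioc_subset_Ioi_self).const_mul _
    · rw [Filter.EventuallyLE, ae_restrict_iff' measurableSet_Ioc]
      exact Filter.Eventually.of_forall inner_bound
  have hXnn : 0 ≤ᵐ[volume.restrict (Set.Ioi (0:ℝ))]
      fun r : ℝ => r ^ (-(d:ℝ)/2) * Real.exp (-A/r) := by
    rw [Filter.EventuallyLE, ae_restrict_iff' measurableSet_Ioi]
    exact Filter.Eventually.of_forall fun r hr =>
      mul_nonneg (Real.rpow_nonneg (le_of_lt hr) _) (Real.exp_pos _).le
  have h3 : (∫ r in Set.Ioc (0:ℝ) t, r ^ (-(d:ℝ)/2) * Real.exp (-A/r))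
      ≤ Γc * A ^ (1-(d:ℝ)/2) := by
    calc (∫ r in Set.Ioc (0:ℝ) t, r ^ (-(d:ℝ)/2) * Real.exp (-A/r))
        ≤ ∫ r in Set.Ioi (0:ℝ), r ^ (-(d:ℝ)/2) * Real.exp (-A/r) :=
          setIntegral_mono_set hXint.1 hXnn
            (Filter.Eventually.of_forall fun r hr => Set.Ioc_subset_Ioi_self hr)
      _ = Γc * A ^ (1-(d:ℝ)/2) := hXint.2
  have hApow : A ^ (1-(d:ℝ)/2) = (2*a) ^ ((d:ℝ)/2-1) * (‖x‖ ^ ((d:ℝ)-2))⁻¹ := by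
    rw [hA, Real.div_rpow (by positivity) h2a.le]
    rw [← Real.rpow_natCast ‖x‖ 2, ← Real.rpow_mul hx0.le]
    rw [show (2:ℕ) * (1-(d:ℝ)/2) = -((d:ℝ)-2) by push_cast; ring]
    rw [Real.rpow_neg hx0.le]
    rw [show (1:ℝ)-(d:ℝ)/2 = -((d:ℝ)/2-1) by ring, Real.rpow_neg h2a.le]
    rw [div_eq_mul_inv, inv_inv]
    ring
  have hS0 : 0 ≤ t ^ ((d:ℝ)/p) + t ^ ((d:ℝ)/(2*p)) := by
    have := Real.rpow_pos_of_pos ht0 ((d:ℝ)/p)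
    have := Real.rpow_pos_of_pos ht0 ((d:ℝ)/(2*p))
    linarith
  calc (∫ r in Set.Ioc (0:ℝ) t, ∫ y, hker d Cc t p q (x - y) r * hker d Cc t p q y r)
      ≤ ∫ r in Set.Ioc (0:ℝ) t, K * (t ^ ((d:ℝ)/p) + t ^ ((d:ℝ)/(2*p)))
          * (r ^ (-(d:ℝ)/2) * Real.exp (-A/r)) := houter
    _ = K * (t ^ ((d:ℝ)/p) + t ^ ((d:ℝ)/(2*p)))
          * ∫ r in Set.Ioc (0:ℝ) t, r ^ (-(d:ℝ)/2) * Real.exp (-A/r) := integral_const_mul _ _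
    _ ≤ K * (t ^ ((d:ℝ)/p) + t ^ ((d:ℝ)/(2*p))) * (Γc * A ^ (1-(d:ℝ)/2)) := by
        exact mul_le_mul_of_nonneg_left h3 (by positivity)
    _ = K * Γc * (2*a) ^ ((d:ℝ)/2-1) * (t ^ ((d:ℝ)/p) + t ^ ((d:ℝ)/(2*p)))
          / ‖x‖ ^ ((d:ℝ)-2) := by
        rw [hApow, div_eq_mul_inv]
        ring
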